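/- arXiv:1003.1589 — 4 statements merged into one kernel-verified Lean document; each statement's English description precedes it below -/
import Mathlib

section
/- Removable singularity with positive real part: if f is holomorphic on the punctured unit disc {z ∈ ℂ : 0 < |z| < 1} and Re f(z) ≥ 0 for every z in the punctured disc, then f extends to a holomorphic function on the whole unit disc {z ∈ ℂ : |z| < 1}. -/
open Complex Metric Set Function Filter Topology

lemma aux_ne_neg_one {f : ℂ → ℂ} {z : ℂ} (h : 0 ≤ (f z).re) : f z + 1 ≠ 0 := by
  intro hz
  have : (f z + 1).re = 0 := by rw [hz]; simp
  simp [Complex.add_re] at this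
  linarith

lemma aux_mobius_ne_one {f : ℂ → ℂ} {z : ℂ} (h : 0 ≤ (f z).re) :
    (f z - 1) / (f z + 1) ≠ 1 := by
  intro hz
  rw [div_eq_one_iff_eq (aux_ne_neg_one h)] at hz
  have : (1:ℂ) = -1 := by linear_combination -hz
  norm_num at this

lemma aux_mobius_norm_le {f : ℂ → ℂ} {z : ℂ} (h : 0 ≤ (f z).re) :
    ‖(f z - 1) / (f z + 1)‖ ≤ 1 := by
  have hd : f z + 1 ≠ 0 := aux_ne_neg_one h
  rw [norm_div, div_le_one (norm_pos_iff.mpr hd)]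
  rw [Complex.norm_def, Complex.norm_def]
  apply Real.sqrt_le_sqrt
  simp only [Complex.normSq_apply, Complex.sub_re, Complex.sub_im, Complex.add_re,
    Complex.add_im, Complex.one_re, Complex.one_im]
  nlinarith

/-- Removable singularity with positive real part: a holomorphic function on the
punctured unit disc with nonnegative real part extends holomorphically to the
whole unit disc. -/
theorem removable_singularity_of_nonneg_re (f : ℂ → ℂ)
    (hf : DifferentiableOn ℂ f {z : ℂ | 0 < ‖z‖ ∧ ‖z‖ < 1})
    (hre : ∀ z ∈ {z : ℂ | 0 < ‖z‖ ∧ ‖z‖ < 1}, 0 ≤ (f z).re) :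
    ∃ g : ℂ → ℂ, DifferentiableOn ℂ g {z : ℂ | ‖z‖ < 1} ∧
      Set.EqOn g f {z : ℂ | 0 < ‖z‖ ∧ ‖z‖ < 1} := by
  have hset : {z : ℂ | 0 < ‖z‖ ∧ ‖z‖ < 1}
      = Metric.ball (0:ℂ) 1 \ {0} := by
    ext z
    simp [Metric.mem_ball, Complex.dist_eq, and_comm, AbsoluteValue.pos_iff]
  have hball : {z : ℂ | ‖z‖ < 1} = Metric.ball (0:ℂ) 1 := by
    ext z; simp [Metric.mem_ball, Complex.dist_eq]
  rw [hset] at hf hre ⊢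
  rw [hball]
  set g : ℂ → ℂ := fun z => (f z - 1) / (f z + 1) with hg
  have hgd : DifferentiableOn ℂ g (Metric.ball (0:ℂ) 1 \ {0}) := by
    apply DifferentiableOn.div (hf.sub (differentiableOn_const 1))
      (hf.add (differentiableOn_const 1))
    intro z hz
    exact aux_ne_neg_one (hre z hz)
  have hgb : ∀ z ∈ Metric.ball (0:ℂ) 1 \ {0}, ‖g z‖ ≤ 1 := fun z hz =>
    aux_mobius_norm_le (hre z hz)
  -- extend g
  set G : ℂ → ℂ := Function.update g 0 (limUnder (𝓝[≠] (0:ℂ)) g) with hG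
  have hGd : DifferentiableOn ℂ G (Metric.ball (0:ℂ) 1) :=
    Complex.differentiableOn_update_limUnder_of_bddAbove
      (Metric.ball_mem_nhds 0 one_pos) hgd
      ⟨1, by rintro x ⟨z, hz, rfl⟩; exact hgb z hz⟩
  have hGg : ∀ z ∈ Metric.ball (0:ℂ) 1 \ {0}, G z = g z := by
    intro z hz
    exact Function.update_of_ne hz.2 _ _
  -- norm bound on G on the whole ball
  have hne : (𝓝[Metric.ball (0:ℂ) 1 \ {0}] 0).NeBot := by
    have h1 : Metric.ball (0:ℂ) 1 \ {0} = Metric.ball (0:ℂ) 1 ∩ {(0:ℂ)}ᶜ := rfl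
    rw [h1, nhdsWithin_inter_of_mem (mem_nhdsWithin_of_mem_nhds
      (Metric.ball_mem_nhds 0 one_pos))]
    exact Filter.NeBot.mono (by infer_instance) le_rfl
  have hG0 : ‖G 0‖ ≤ 1 := by
    have hc : ContinuousWithinAt G (Metric.ball (0:ℂ) 1) 0 :=
      (hGd.continuousOn).continuousWithinAt (by simp)
    have ht : Filter.Tendsto G (𝓝[Metric.ball (0:ℂ) 1 \ {0}] 0) (𝓝 (G 0)) :=
      hc.tendsto.mono_left (nhdsWithin_mono _ diff_subset)
    exact le_of_tendsto (ht.norm)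
      (eventually_mem_nhdsWithin.mono fun z hz => by rw [hGg z hz]; exact hgb z hz)
  have hGb : ∀ z ∈ Metric.ball (0:ℂ) 1, ‖G z‖ ≤ 1 := by
    intro z hz
    by_cases h0 : z = 0
    · rw [h0]; exact hG0
    · rw [hGg z ⟨hz, h0⟩]; exact hgb z ⟨hz, h0⟩
  -- G 0 ≠ 1
  have hG0ne : G 0 ≠ 1 := by
    intro h1
    have hmax : IsMaxOn (norm ∘ G) (Metric.ball (0:ℂ) 1) 0 := by
      intro z hz
      simp only [Function.comp_apply, h1]
      simpa [h1] using hGb z hz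
    have heq : Set.EqOn G (Function.const ℂ (G 0)) (Metric.ball (0:ℂ) 1) :=
      Complex.eqOn_of_isPreconnected_of_isMaxOn_norm
        (convex_ball (0:ℂ) 1).isPreconnected Metric.isOpen_ball hGd (by simp) hmax
    have hhalf : (1/2 : ℂ) ∈ Metric.ball (0:ℂ) 1 \ {0} := by
      constructor
      · simp [Metric.mem_ball, Complex.dist_eq]; norm_num
      · norm_num
    have := heq hhalf.1
    rw [hGg _ hhalf, h1] at this
    exact aux_mobius_ne_one (hre _ hhalf) this
  -- G z ≠ 1 everywhere on the ball
  have hGne : ∀ z ∈ Metric.ball (0:ℂ) 1, 1 - G z ≠ 0 := by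
    intro z hz h
    have h1 : G z = 1 := by linear_combination -h
    by_cases h0 : z = 0
    · exact hG0ne (h0 ▸ h1)
    · rw [hGg z ⟨hz, h0⟩] at h1
      exact aux_mobius_ne_one (hre z ⟨hz, h0⟩) h1
  refine ⟨fun z => (1 + G z) / (1 - G z), ?_, ?_⟩
  · exact DifferentiableOn.div ((differentiableOn_const 1).add hGd)
      ((differentiableOn_const 1).sub hGd) hGne
  · intro z hz
    have h1 : G z = g z := hGg z hz
    have h2 : f z + 1 ≠ 0 := aux_ne_neg_one (hre z hz)
    simp only [h1, hg]
    field_simp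
    ring
end

section
/- Flatness is preserved under exponential reparametrization: let δ > 0 and let d : ℝ → ℝ be continuous on [0, δ) with d(0) = 0 and 0 < d(t) < 1 for all t ∈ (0, δ), and suppose that for every natural number k, (d(t) − t)/t^k → 0 as t → 0 from the right. Define θ(t) = e^{−1/t} for t > 0, so that θ⁻¹(s) = −1/log(s) for 0 < s < 1. Then the conjugated map g(t) = −1/log(d(e^{−1/t})), defined for all sufficiently small t > 0, again has infinite order of contact with the identity at 0: for every natural number k, (g(t) − t)/t^k → 0 as t → 0 from the right. -/
open Filter Real

lemma abs_log_le_aux (x : ℝ) (hx : 1/2 ≤ x) (hx0 : 0 < x) : |Real.log x| ≤ 2 * |x - 1| := by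
  rcases le_or_gt 1 x with h | h
  · have h1 : 0 ≤ Real.log x := Real.log_nonneg h
    have h2 : Real.log x ≤ x - 1 := Real.log_le_sub_one_of_pos hx0
    rw [abs_of_nonneg h1, abs_of_nonneg (by linarith)]
    linarith
  · have h1 : Real.log x ≤ 0 := Real.log_nonpos hx0.le h.le
    have h2 : Real.log x⁻¹ ≤ x⁻¹ - 1 := Real.log_le_sub_one_of_pos (by positivity)
    rw [Real.log_inv] at h2
    have h3 : x⁻¹ - 1 ≤ 2 * (1 - x) := by
      have h4 : x⁻¹ - 1 = (1 - x) / x := by field_simp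
      rw [h4, div_le_iff₀ hx0]
      nlinarith
    rw [abs_of_nonpos h1, abs_of_nonpos (by linarith)]
    linarith

/-- Flatness is preserved under the exponential reparametrization `θ t = e^{-1/t}`:
if `d` is continuous on `[0, δ)` with `d 0 = 0`, `0 < d t < 1` on `(0, δ)`, and
`d t - t = o(t^k)` as `t → 0⁺` for every `k`, then the conjugated map
`g t = -1 / log (d (exp (-1/t)))` again satisfies `g t - t = o(t^k)` as `t → 0⁺`
for every `k`. -/
theorem flatness_preserved_under_exponential_reparametrization
    (δ : ℝ) (hδ : 0 < δ) (d : ℝ → ℝ)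
    (hcont : ContinuousOn d (Set.Ico 0 δ)) (h0 : d 0 = 0)
    (hrange : ∀ t ∈ Set.Ioo 0 δ, 0 < d t ∧ d t < 1)
    (hflat : ∀ k : ℕ, Tendsto (fun t => (d t - t) / t ^ k)
      (nhdsWithin 0 (Set.Ioi 0)) (nhds 0)) :
    ∀ k : ℕ, Tendsto
      (fun t => (-1 / Real.log (d (Real.exp (-1 / t))) - t) / t ^ k)
      (nhdsWithin 0 (Set.Ioi 0)) (nhds 0) := by
  intro k
  set s : ℝ → ℝ := fun t => Real.exp (-1 / t) with hs
  have hspos : ∀ t, 0 < s t := fun t => Real.exp_pos _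
  have hinv : Tendsto (fun t : ℝ => -1 / t) (nhdsWithin 0 (Set.Ioi 0)) atBot := by
    have h1 := tendsto_inv_nhdsGT_zero (𝕜 := ℝ)
    have h2 : Tendsto (fun t : ℝ => -t⁻¹) (nhdsWithin 0 (Set.Ioi 0)) atBot :=
      tendsto_neg_atTop_atBot.comp h1
    exact h2.congr fun t => by ring
  have hsT : Tendsto s (nhdsWithin 0 (Set.Ioi 0)) (nhdsWithin 0 (Set.Ioi 0)) := by
    rw [tendsto_nhdsWithin_iff]
    exact ⟨Real.tendsto_exp_atBot.comp hinv, Eventually.of_forall fun t => hspos t⟩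
  have hflatm : ∀ m : ℕ, Tendsto (fun t => (d (s t) - s t) / (s t) ^ m)
      (nhdsWithin 0 (Set.Ioi 0)) (nhds 0) := fun m => (hflat m).comp hsT
  have hev1 : ∀ᶠ t in nhdsWithin 0 (Set.Ioi 0), s t ∈ Set.Ioo 0 δ :=
    hsT.eventually (Ioo_mem_nhdsGT_of_mem ⟨le_refl 0, hδ⟩)
  have hratio : Tendsto (fun t => d (s t) / s t) (nhdsWithin 0 (Set.Ioi 0)) (nhds 1) := by
    have h1 : Tendsto (fun t => (d (s t) - s t) / s t + 1) (nhdsWithin 0 (Set.Ioi 0))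
        (nhds (0 + 1)) :=
      Tendsto.add ((hflatm 1).congr (fun t => by rw [pow_one])) tendsto_const_nhds
    rw [zero_add] at h1
    refine h1.congr fun t => ?_
    have := (hspos t).ne'
    field_simp
    ring
  set L : ℝ → ℝ := fun t => Real.log (d (s t)) - Real.log (s t) with hL
  have hLlog : ∀ᶠ t in nhdsWithin 0 (Set.Ioi 0), L t = Real.log (d (s t) / s t) := by
    filter_upwards [hev1] with t ht
    rw [hL, Real.log_div (hrange _ ht).1.ne' (hspos t).ne']
  have hL0 : Tendsto L (nhdsWithin 0 (Set.Ioi 0)) (nhds 0) := by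
    have h1 := (Real.continuousAt_log one_ne_zero).tendsto.comp hratio
    rw [Real.log_one] at h1
    exact Tendsto.congr' (hLlog.mono fun t ht => ht.symm) h1
  have hev2 : ∀ᶠ t in nhdsWithin 0 (Set.Ioi 0), 1/2 ≤ d (s t) / s t :=
    hratio.eventually (eventually_ge_nhds (by norm_num))
  have hLbd : ∀ᶠ t in nhdsWithin 0 (Set.Ioi 0),
      |L t| ≤ 2 * |d (s t) - s t| / s t := by
    filter_upwards [hev1, hev2, hLlog] with t ht h2 hlog
    rw [hlog]
    have h3 := abs_log_le_aux _ h2 (div_pos (hrange _ ht).1 (hspos t))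
    calc |Real.log (d (s t) / s t)| ≤ 2 * |d (s t) / s t - 1| := h3
      _ = 2 * |d (s t) - s t| / s t := by
          rw [div_sub_one (hspos t).ne', abs_div, abs_of_pos (hspos t)]; ring
  -- B := s² * (t²/t^k) → 0
  have hBsmall : Tendsto (fun t => (s t)^2 * (t^2 / t^k)) (nhdsWithin 0 (Set.Ioi 0)) (nhds 0) := by
    have hA : Tendsto (fun t : ℝ => (1/t)^k * Real.exp (-(1/t)))
        (nhdsWithin 0 (Set.Ioi 0)) (nhds 0) := by
      have h1 := (tendsto_pow_mul_exp_neg_atTop_nhds_zero k).comp (tendsto_inv_nhdsGT_zero (𝕜 := ℝ))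
      exact h1.congr fun t => by simp [one_div]
    refine squeeze_zero' ?_ ?_ hA
    · filter_upwards [self_mem_nhdsWithin] with t (ht : 0 < t)
      positivity
    · filter_upwards [self_mem_nhdsWithin,
        Ioo_mem_nhdsGT_of_mem (Set.left_mem_Ico.2 one_pos)] with t ht' ht1'
      have ht : (0:ℝ) < t := ht'
      have ht1 : t < 1 := ht1'.2
      have hse : s t = Real.exp (-(1/t)) := by rw [hs]; ring_nf
      have h1 : s t ≤ 1 := by
        rw [hse]
        exact Real.exp_le_one_iff.2 (neg_nonpos_of_nonneg (by positivity))
      have h2 : t^2 ≤ 1 := by nlinarith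
      have h3 : (s t)^2 ≤ s t := by nlinarith [hspos t]
      have h4 : t^2 / t^k ≤ 1 / t^k :=
        div_le_div_of_nonneg_right h2 (by positivity)
      calc (s t)^2 * (t^2 / t^k) ≤ s t * (1 / t^k) := by
            have h5 : 0 ≤ t^2 / t^k := by positivity
            nlinarith [hspos t, mul_le_mul h3 h4 h5 (hspos t).le]
        _ = (1/t)^k * Real.exp (-(1/t)) := by rw [hse, div_pow, one_pow]; ring
  -- numerator N → 0
  have hN : Tendsto (fun t => L t * (t^2 / t^k)) (nhdsWithin 0 (Set.Ioi 0)) (nhds 0) := by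
    have hA3 : Tendsto (fun t => 2 * |(d (s t) - s t) / (s t)^3|)
        (nhdsWithin 0 (Set.Ioi 0)) (nhds (2 * |(0:ℝ)|)) :=
      tendsto_const_nhds.mul (hflatm 3).abs
    rw [abs_zero, mul_zero] at hA3
    have hprod := hA3.mul hBsmall
    rw [mul_zero] at hprod
    refine squeeze_zero_norm' ?_ hprod
    filter_upwards [hLbd, self_mem_nhdsWithin] with t hb (ht : 0 < t)
    have hX : (0:ℝ) ≤ t ^ 2 / t ^ k := by positivity
    have hre : 2 * |(d (s t) - s t) / (s t) ^ 3| * ((s t) ^ 2 * (t ^ 2 / t ^ k))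
        = 2 * |d (s t) - s t| / s t * (t ^ 2 / t ^ k) := by
      rw [abs_div, abs_of_pos (pow_pos (hspos t) 3)]
      have := (hspos t).ne'
      field_simp
    rw [hre, Real.norm_eq_abs, abs_mul, abs_of_nonneg hX]
    exact mul_le_mul_of_nonneg_right hb hX
  -- denominator → 1
  have hid : Tendsto (fun t : ℝ => t) (nhdsWithin 0 (Set.Ioi 0)) (nhds 0) :=
    tendsto_id.mono_right nhdsWithin_le_nhds
  have hden : Tendsto (fun t => 1 - t * L t) (nhdsWithin 0 (Set.Ioi 0)) (nhds 1) := by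
    have h1 : Tendsto (fun t => 1 - t * L t) (nhdsWithin 0 (Set.Ioi 0)) (nhds (1 - 0 * 0)) :=
      Tendsto.sub tendsto_const_nhds (hid.mul hL0)
    simpa using h1
  have hdenne : ∀ᶠ t in nhdsWithin 0 (Set.Ioi 0), 1 - t * L t ≠ 0 :=
    hden.eventually (eventually_ne_nhds one_ne_zero)
  have hfinal := hN.div hden one_ne_zero
  rw [zero_div] at hfinal
  refine Tendsto.congr' ?_ hfinal
  filter_upwards [hev1, self_mem_nhdsWithin] with t h1 (ht : 0 < t)
  have hd01 := hrange _ h1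
  have hldne : Real.log (d (s t)) ≠ 0 := (Real.log_neg hd01.1 hd01.2).ne
  have htne : t ≠ 0 := ht.ne'
  have hLt : L t = Real.log (d (s t)) + 1 / t := by
    rw [hL]; simp only [hs, Real.log_exp]; ring
  show L t * (t ^ 2 / t ^ k) / (1 - t * L t) = (-1 / Real.log (d (s t)) - t) / t ^ k
  rw [hLt]
  have h4 : 1 - t * (Real.log (d (s t)) + 1 / t) = -(t * Real.log (d (s t))) := by
    field_simp
    ring
  rw [h4]
  field_simp
  ring
end

section
/- The Hopf covering transformation is contracting: fix α, β, λ ∈ ℂ and m ∈ ℕ with 0 < |α| ≤ |β| < 1 and (β^m − α)λ = 0, and define H : ℂ² → ℂ² by H(z, w) = (αz + λw^m, βw). Then for every point p ∈ ℂ², the iterates H^[n](p) converge to (0,0) as n → ∞. -/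
open Filter

lemma hopf_aux_nat_pow_tendsto {α : ℂ} (h : ‖α‖ < 1) :
    Tendsto (fun n : ℕ => (n : ℂ) * α ^ n) atTop (nhds 0) := by
  rw [tendsto_zero_iff_norm_tendsto_zero]
  have := tendsto_self_mul_const_pow_of_lt_one (norm_nonneg α) (by simpa using h)
  refine this.congr fun n => ?_
  simp [norm_mul, norm_pow]

lemma hopf_aux_shift {α : ℂ} (h : ‖α‖ < 1) :
    Tendsto (fun n : ℕ => (n : ℂ) * α ^ (n - 1)) atTop (nhds 0) := by
  rw [← tendsto_add_atTop_iff_nat 1]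
  have h1 : Tendsto (fun n : ℕ => (n : ℂ) * α ^ n + α ^ n) atTop (nhds 0) := by
    simpa using (hopf_aux_nat_pow_tendsto h).add
      (tendsto_pow_atTop_nhds_zero_of_norm_lt_one (x := α) (by simpa using h))
  refine h1.congr fun n => ?_
  push_cast
  ring

/-- The Hopf covering transformation `H(z, w) = (αz + λw^m, βw)` is contracting:
the iterates of every point converge to the origin. -/
theorem hopf_map_contracting (α β l : ℂ) (m : ℕ)
    (hα : 0 < ‖α‖) (hαβ : ‖α‖ ≤ ‖β‖)
    (hβ : ‖β‖ < 1) (hrel : (β ^ m - α) * l = 0)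
    (H : ℂ × ℂ → ℂ × ℂ) (hH : ∀ p : ℂ × ℂ, H p = (α * p.1 + l * p.2 ^ m, β * p.2)) :
    ∀ p : ℂ × ℂ, Tendsto (fun n => H^[n] p) atTop (nhds (0, 0)) := by
  have hα1 : ‖α‖ < 1 := lt_of_le_of_lt hαβ hβ
  have hlb : l * β ^ m = l * α := by linear_combination hrel
  have hlbn : ∀ n : ℕ, l * β ^ (m * n) = l * α ^ n := by
    intro n
    induction n with
    | zero => simp
    | succ n ih =>
      have : l * β ^ (m * (n + 1)) = (l * β ^ m) * β ^ (m * n) := by ring_nf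
      rw [this, hlb]
      calc l * α * β ^ (m * n) = α * (l * β ^ (m * n)) := by ring
        _ = α * (l * α ^ n) := by rw [ih]
        _ = l * α ^ (n + 1) := by ring
  intro p
  have key : ∀ n : ℕ, H^[n] p =
      (α ^ n * p.1 + (n : ℂ) * l * p.2 ^ m * α ^ (n - 1), β ^ n * p.2) := by
    intro n
    induction n with
    | zero => simp
    | succ n ih =>
      rw [Function.iterate_succ_apply', ih, hH]
      simp only [Prod.mk.injEq]
      constructor
      · have hmul : mul_pow (β ^ n) p.2 m = mul_pow (β ^ n) p.2 m := rfl
        have h2 : (β ^ n * p.2) ^ m = β ^ (m * n) * p.2 ^ m := by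
          rw [mul_pow, ← pow_mul, Nat.mul_comm]
        show α * (α ^ n * p.1 + (n : ℂ) * l * p.2 ^ m * α ^ (n - 1)) +
            l * (β ^ n * p.2) ^ m =
            α ^ (n + 1) * p.1 + ((n + 1 : ℕ) : ℂ) * l * p.2 ^ m * α ^ (n + 1 - 1)
        push_cast
        rw [h2]
        have h3 : l * (β ^ (m * n) * p.2 ^ m) = l * α ^ n * p.2 ^ m := by
          rw [← mul_assoc, hlbn]
        rw [h3]
        have h4 : α * ((n : ℂ) * α ^ (n - 1)) = (n : ℂ) * α ^ n := by
          cases n with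
          | zero => simp
          | succ k => simp [pow_succ]; ring
        calc α * (α ^ n * p.1 + (n : ℂ) * l * p.2 ^ m * α ^ (n - 1)) + l * α ^ n * p.2 ^ m
            = α ^ (n + 1) * p.1 + (α * ((n : ℂ) * α ^ (n - 1))) * l * p.2 ^ m
              + l * α ^ n * p.2 ^ m := by ring
          _ = α ^ (n + 1) * p.1 + ((n : ℂ) * α ^ n) * l * p.2 ^ m + l * α ^ n * p.2 ^ m := by
              rw [h4]
          _ = α ^ (n + 1) * p.1 + ((n : ℕ) + 1 : ℂ) * l * p.2 ^ m * α ^ n := by ring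
      · show β * (β ^ n * p.2) = β ^ (n + 1) * p.2
        ring
  have hβ1 : ‖β‖ < 1 := hβ
  have t2 : Tendsto (fun n : ℕ => β ^ n * p.2) atTop (nhds 0) := by
    simpa using (tendsto_pow_atTop_nhds_zero_of_norm_lt_one (x := β)
      (by simpa using hβ1)).mul_const p.2
  have t1 : Tendsto (fun n : ℕ => α ^ n * p.1 + (n : ℂ) * l * p.2 ^ m * α ^ (n - 1))
      atTop (nhds 0) := by
    have ta : Tendsto (fun n : ℕ => α ^ n * p.1) atTop (nhds 0) := by
      simpa using (tendsto_pow_atTop_nhds_zero_of_norm_lt_one (x := α)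
        (by simpa using hα1)).mul_const p.1
    have tb : Tendsto (fun n : ℕ => (n : ℂ) * l * p.2 ^ m * α ^ (n - 1)) atTop (nhds 0) := by
      have := (hopf_aux_shift hα1).mul_const (l * p.2 ^ m)
      simp only [zero_mul] at this
      refine this.congr fun n => ?_
      ring
    simpa using ta.add tb
  have : Tendsto (fun n : ℕ => ((α ^ n * p.1 + (n : ℂ) * l * p.2 ^ m * α ^ (n - 1),
      β ^ n * p.2) : ℂ × ℂ)) atTop (nhds (0, 0)) := t1.prodMk_nhds t2
  exact this.congr fun n => (key n).symm
end

section
/- The group generated by the Hopf covering transformation acts freely on ℂ² \ {0}: fix α, β, λ ∈ ℂ and m ∈ ℕ with 0 < |α| ≤ |β| < 1 and (β^m − α)λ = 0, and define H : ℂ² → ℂ² by H(z, w) = (αz + λw^m, βw). Then for every p ∈ ℂ² with p ≠ (0,0) and every natural number n ≥ 1, the n-th iterate satisfies H^[n](p) ≠ p. -/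
/-- The group generated by the Hopf covering transformation acts freely on
`ℂ² \ {0}`: no nonzero point is fixed by any nontrivial iterate of `H`. -/
theorem hopf_map_free_action (α β l : ℂ) (m : ℕ)
    (hα : 0 < ‖α‖) (hαβ : ‖α‖ ≤ ‖β‖)
    (hβ : ‖β‖ < 1) (hrel : (β ^ m - α) * l = 0)
    (H : ℂ × ℂ → ℂ × ℂ) (hH : ∀ p : ℂ × ℂ, H p = (α * p.1 + l * p.2 ^ m, β * p.2)) :
    ∀ p : ℂ × ℂ, p ≠ (0, 0) → ∀ n : ℕ, 1 ≤ n → H^[n] p ≠ p := by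
  intro p hp n hn heq
  have hαlt1 : ‖α‖ < 1 := lt_of_le_of_lt hαβ hβ
  -- second coordinate of iterates
  have hsnd : ∀ k : ℕ, (H^[k] p).2 = β ^ k * p.2 := by
    intro k
    induction k with
    | zero => simp
    | succ k ih =>
      rw [Function.iterate_succ_apply', hH, pow_succ]
      simp [ih]; ring
  by_cases hw : p.2 = 0
  · -- on the axis, first coordinate scales by α^k
    have hlterm : l * (0 : ℂ) ^ m = 0 := by
      rcases Nat.eq_zero_or_pos m with hm0 | hm1
      · -- m = 0 : (1 - α) l = 0, and α ≠ 1 since |α| < 1, so l = 0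
        subst hm0
        simp only [pow_zero, mul_one]
        rcases mul_eq_zero.mp hrel with h | h
        · exfalso
          have : α = 1 := by linear_combination -h
          rw [this] at hαlt1; simp at hαlt1
        · exact h
      · simp [zero_pow (by omega : m ≠ 0)]
    have hfst : ∀ k : ℕ, (H^[k] p).1 = α ^ k * p.1 := by
      intro k
      induction k with
      | zero => simp
      | succ k ih =>
        rw [Function.iterate_succ_apply', hH, ih, hsnd k, hw, mul_zero, hlterm,
          pow_succ]
        ring
    have hp1 : p.1 ≠ 0 := fun h1 => hp (Prod.ext h1 hw)
    have h1 := congrArg Prod.fst heq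
    rw [hfst n] at h1
    have hα1 : α ^ n = 1 := by
      have : α ^ n * p.1 = 1 * p.1 := by rw [one_mul]; exact h1
      exact mul_right_cancel₀ hp1 this
    have habs : ‖α‖ ^ n = 1 := by rw [← norm_pow, hα1, norm_one]
    have hlt : ‖α‖ ^ n < 1 :=
      pow_lt_one₀ (norm_nonneg α) hαlt1 (by omega)
    linarith
  · have h2 := congrArg Prod.snd heq
    rw [hsnd n] at h2
    have hβ1 : β ^ n = 1 := by
      have : β ^ n * p.2 = 1 * p.2 := by rw [one_mul]; exact h2
      exact mul_right_cancel₀ hw this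
    have habs : ‖β‖ ^ n = 1 := by rw [← norm_pow, hβ1, norm_one]
    have hlt : ‖β‖ ^ n < 1 :=
      pow_lt_one₀ (norm_nonneg β) hβ (by omega)
    linarith
end
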